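/- Uniqueness of the data Shapley value (corrected form of the paper's Proposition, including efficiency): let ψ assign to every performance score V : 𝒫(D) → ℝ and every i ∈ D a real value ψ_i(V), and suppose ψ satisfies (i) the null player property (if V(S ∪ {i}) = V(S) for all S ⊆ D \ {i}, then ψ_i(V) = 0), (ii) symmetry (if V(S ∪ {i}) = V(S ∪ {j}) for all S ⊆ D \ {i,j}, then ψ_i(V) = ψ_j(V)), (iii) additivity (ψ_i(V + W) = ψ_i(V) + ψ_i(W) for all performance scores V, W and all i ∈ D, where (V+W)(S) = V(S) + W(S)), and (iv) efficiency (Σ_{i ∈ D} ψ_i(V) = V(D) − V(∅)). Then for every performance score V and every i ∈ D, ψ_i(V) = (1/n) · Σ_{S ⊆ D \ {i}} (V(S ∪ {i}) − V(S)) / binom(n−1, |S|), i.e. ψ coincides with the data Shapley value. -/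

import Mathlib

/-- The data Shapley value of data source `i` for performance score `V`,
with normalization constant `C = 1/n`. -/
noncomputable def dataShapley {n : ℕ} (V : Finset (Fin n) → ℝ) (i : Fin n) : ℝ :=
  (1 / (n : ℝ)) * ∑ S ∈ (Finset.univ.erase i).powerset,
    (V (insert i S) - V S) / ((n - 1).choose S.card : ℝ)

namespace DataShapleyAux

open Finset

variable {n : ℕ}

/-- Scaled unanimity game. -/
def uGame (c : ℝ) (T : Finset (Fin n)) : Finset (Fin n) → ℝ :=
  fun S => if T ⊆ S then c else 0

noncomputable def moeb (V : Finset (Fin n) → ℝ) (T : Finset (Fin n)) : ℝ :=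
  ∑ U ∈ T.powerset, (-1 : ℝ) ^ (T.card - U.card) * V U

lemma moeb_inv (V : Finset (Fin n) → ℝ) (S : Finset (Fin n)) :
    ∑ T ∈ S.powerset, moeb V T = V S := by
  classical
  unfold moeb
  have h1 : ∀ T ∈ S.powerset, ∑ U ∈ T.powerset, (-1 : ℝ) ^ (T.card - U.card) * V U
      = ∑ U ∈ S.powerset, if U ⊆ T then (-1 : ℝ) ^ (T.card - U.card) * V U else 0 := by
    intro T hT
    rw [mem_powerset] at hT
    rw [← Finset.sum_filter]
    congr 1
    ext U
    simp only [mem_filter, mem_powerset]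
    exact ⟨fun h => ⟨h.trans hT, h⟩, fun h => h.2⟩
  rw [Finset.sum_congr rfl h1, Finset.sum_comm]
  have h2 : ∀ U ∈ S.powerset,
      (∑ T ∈ S.powerset, if U ⊆ T then (-1 : ℝ) ^ (T.card - U.card) * V U else 0)
      = if U = S then V U else 0 := by
    intro U hU
    rw [mem_powerset] at hU
    rw [Finset.sum_ite, Finset.sum_const_zero, add_zero]
    have hbij : ∑ T ∈ S.powerset.filter (fun T => U ⊆ T), (-1 : ℝ) ^ (T.card - U.card) * V U
        = ∑ R ∈ (S \ U).powerset, (-1 : ℝ) ^ R.card * V U := by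
      apply Finset.sum_nbij' (fun T => T \ U) (fun R => R ∪ U)
      · intro T hT
        simp only [mem_filter, mem_powerset] at hT
        exact mem_powerset.2 (sdiff_subset_sdiff hT.1 le_rfl)
      · intro R hR
        rw [mem_powerset] at hR
        simp only [mem_filter, mem_powerset]
        exact ⟨union_subset (hR.trans (sdiff_subset)) hU, subset_union_right⟩
      · intro T hT
        simp only [mem_filter, mem_powerset] at hT
        exact sdiff_union_of_subset hT.2
      · intro R hR
        rw [mem_powerset] at hR
        have hd : Disjoint R U := disjoint_of_subset_left hR sdiff_disjoint
        exact union_sdiff_cancel_right hd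
      · intro T hT
        simp only [mem_filter, mem_powerset] at hT
        congr 2
        exact (card_sdiff_of_subset hT.2).symm
    rw [hbij, ← Finset.sum_mul]
    have : (∑ R ∈ (S \ U).powerset, (-1 : ℝ) ^ R.card) = if U = S then 1 else 0 := by
      have hz := Finset.sum_powerset_neg_one_pow_card (x := S \ U)
      have : ((∑ m ∈ (S \ U).powerset, (-1 : ℤ) ^ m.card : ℤ) : ℝ)
          = ∑ R ∈ (S \ U).powerset, (-1 : ℝ) ^ R.card := by push_cast; rfl
      rw [← this, hz]
      have : S \ U = ∅ ↔ U = S := by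
        rw [sdiff_eq_empty_iff_subset]
        exact ⟨fun h => subset_antisymm hU h, fun h => h ▸ le_rfl⟩
      split_ifs with h h' h' <;> simp_all
    rw [this]
    split_ifs <;> simp
  rw [Finset.sum_congr rfl h2, Finset.sum_ite_eq' S.powerset S V]
  simp


lemma decomp (V : Finset (Fin n) → ℝ) (S : Finset (Fin n)) :
    V S = ∑ T ∈ (univ : Finset (Fin n)).powerset, uGame (moeb V T) T S := by
  have h : ∑ T ∈ (univ : Finset (Fin n)).powerset, uGame (moeb V T) T S
      = ∑ T ∈ S.powerset, moeb V T := by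
    unfold uGame
    rw [← Finset.sum_filter]
    congr 1
    ext T
    simp [mem_powerset]
  rw [h, moeb_inv]

lemma sum_apply (φ : (Finset (Fin n) → ℝ) → Fin n → ℝ)
    (h0 : ∀ i, φ (fun _ => 0) i = 0)
    (hadd : ∀ V W i, φ (fun S => V S + W S) i = φ V i + φ W i)
    {ι : Type*} (A : Finset ι) (f : ι → Finset (Fin n) → ℝ) (i : Fin n) :
    φ (fun S => ∑ T ∈ A, f T S) i = ∑ T ∈ A, φ (f T) i := by
  classical
  induction A using Finset.induction with
  | empty => simpa using h0 i
  | insert a A ha ih =>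
    have h : (fun S => ∑ T ∈ insert a A, f T S) = fun S => f a S + ∑ T ∈ A, f T S :=
      funext fun S => Finset.sum_insert ha
    rw [h, hadd, ih, Finset.sum_insert ha]

lemma dataShapley_zero (i : Fin n) : dataShapley (fun _ => (0 : ℝ)) i = 0 := by
  simp [dataShapley]

lemma dataShapley_add (V W : Finset (Fin n) → ℝ) (i : Fin n) :
    dataShapley (fun S => V S + W S) i = dataShapley V i + dataShapley W i := by
  unfold dataShapley
  rw [← mul_add, ← Finset.sum_add_distrib]
  congr 1
  apply Finset.sum_congr rfl
  intros
  ring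

lemma psi_uGame (ψ : (Finset (Fin n) → ℝ) → Fin n → ℝ)
    (hnull : ∀ (V : Finset (Fin n) → ℝ) (i : Fin n),
      (∀ S ⊆ Finset.univ.erase i, V (insert i S) = V S) → ψ V i = 0)
    (hsym : ∀ (V : Finset (Fin n) → ℝ) (i j : Fin n), i ≠ j →
      (∀ S ⊆ (Finset.univ.erase i).erase j, V (insert i S) = V (insert j S)) →
      ψ V i = ψ V j)
    (heff : ∀ V : Finset (Fin n) → ℝ, ∑ i : Fin n, ψ V i = V Finset.univ - V ∅)
    (c : ℝ) (T : Finset (Fin n)) (i : Fin n) :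
    ψ (uGame c T) i = if i ∈ T then c / T.card else 0 := by
  classical
  have hnot : ∀ j : Fin n, j ∉ T → ψ (uGame c T) j = 0 := by
    intro j hj
    apply hnull
    intro S hS
    unfold uGame
    congr 1
    simp only [eq_iff_iff]
    constructor
    · intro h x hx
      rcases mem_insert.1 (h hx) with h' | h'
      · exact absurd (h' ▸ hx) hj
      · exact h'
    · intro h
      exact h.trans (subset_insert _ _)
  by_cases hi : i ∈ T
  · rw [if_pos hi]
    have hTne : T.card ≠ 0 := by
      simp only [ne_eq, card_eq_zero]
      exact fun h => by simp [h] at hi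
    have hsame : ∀ j ∈ T, ψ (uGame c T) j = ψ (uGame c T) i := by
      intro j hj
      by_cases hji : j = i
      · rw [hji]
      · apply hsym _ j i hji
        intro S hS
        have hiS : i ∉ S := fun h => by
          have := hS h; simp at this
        have hjS : j ∉ S := fun h => by
          have := hS h; simp at this
        unfold uGame
        rw [if_neg, if_neg]
        · intro h
          have := h hj
          rcases mem_insert.1 this with h' | h'
          · exact hji h'
          · exact hjS h'
        · intro h
          have := h hi
          rcases mem_insert.1 this with h' | h'
          · exact hji h'.symm
          · exact hiS h'
    have heq := heff (uGame c T)
    have hval : uGame c T (univ : Finset (Fin n)) = c := by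
      unfold uGame; rw [if_pos (subset_univ _)]
    have hval0 : uGame c T (∅ : Finset (Fin n)) = 0 := by
      unfold uGame
      rw [if_neg]
      intro h
      simpa using h hi
    rw [hval, hval0, sub_zero] at heq
    have hsplit : ∑ j : Fin n, ψ (uGame c T) j
        = ∑ j ∈ T, ψ (uGame c T) j := by
      rw [← Finset.sum_subset (subset_univ T)]
      intro x _ hx
      exact hnot x hx
    rw [hsplit, Finset.sum_congr rfl hsame, Finset.sum_const, nsmul_eq_mul] at heq
    field_simp at heq ⊢
    linarith [heq]
  · rw [if_neg hi]
    exact hnot i hi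

lemma dataShapley_uGame (c : ℝ) (T : Finset (Fin n)) (i : Fin n) :
    dataShapley (uGame c T) i = if i ∈ T then c / T.card else 0 := by
  classical
  by_cases hi : i ∈ T
  swap
  · rw [if_neg hi]
    unfold dataShapley
    rw [Finset.sum_eq_zero, mul_zero]
    intro S _
    have : uGame c T (insert i S) = uGame c T S := by
      unfold uGame
      congr 1
      simp only [eq_iff_iff]
      constructor
      · intro h x hx
        rcases mem_insert.1 (h hx) with h' | h'
        · exact absurd (h' ▸ hx) hi
        · exact h'
      · intro h; exact h.trans (subset_insert _ _)
    rw [this, sub_self, zero_div]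
  rw [if_pos hi]
  -- setup
  have hn : 0 < n := i.pos
  obtain ⟨t, ht⟩ : ∃ t, T.card = t + 1 :=
    Nat.exists_eq_succ_of_ne_zero (by
      simp only [ne_eq, card_eq_zero]; exact fun h => by simp [h] at hi)
  have htn : t + 1 ≤ n := by
    have h := card_le_univ T
    rwa [Fintype.card_fin, ht] at h
  set A : Finset (Fin n) := T.erase i with hA
  have hcardA : A.card = t := by rw [hA, card_erase_of_mem hi, ht]; omega
  have hAsub : A ⊆ univ.erase i := erase_subset_erase i (subset_univ T)
  set B : Finset (Fin n) := (univ.erase i) \ A with hB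
  have hcardE : (univ.erase i : Finset (Fin n)).card = n - 1 := by
    rw [card_erase_of_mem (mem_univ i), card_univ, Fintype.card_fin]
  have hcardB : B.card = n - 1 - t := by
    rw [hB, card_sdiff_of_subset hAsub, hcardE, hcardA]
  -- step 1: rewrite terms
  unfold dataShapley
  have h1 : ∀ S ∈ (univ.erase i).powerset,
      (uGame c T (insert i S) - uGame c T S) / ((n - 1).choose S.card : ℝ)
      = if A ⊆ S then c / ((n - 1).choose S.card : ℝ) else 0 := by
    intro S hS
    rw [mem_powerset] at hS
    have hiS : i ∉ S := fun h => by simpa using hS h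
    have hS0 : uGame c T S = 0 := by
      unfold uGame
      rw [if_neg (fun h => hiS (h hi))]
    have hS1 : uGame c T (insert i S) = if A ⊆ S then c else 0 := by
      unfold uGame
      congr 1
      simp only [eq_iff_iff]
      rw [Finset.subset_insert_iff]
    rw [hS0, hS1, sub_zero]
    split_ifs <;> simp
  rw [Finset.sum_congr rfl h1]
  -- step 2: bijection to B.powerset
  have h2 : ∑ S ∈ (univ.erase i).powerset,
      (if A ⊆ S then c / ((n - 1).choose S.card : ℝ) else 0)
      = ∑ R ∈ B.powerset, c / ((n - 1).choose (R.card + t) : ℝ) := by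
    rw [← Finset.sum_filter]
    apply Finset.sum_nbij' (fun S => S \ A) (fun R => R ∪ A)
    · intro S hS
      simp only [mem_filter, mem_powerset] at hS
      exact mem_powerset.2 (sdiff_subset_sdiff hS.1 le_rfl)
    · intro R hR
      rw [mem_powerset] at hR
      simp only [mem_filter, mem_powerset]
      exact ⟨union_subset (hR.trans sdiff_subset) hAsub, subset_union_right⟩
    · intro S hS
      simp only [mem_filter, mem_powerset] at hS
      exact sdiff_union_of_subset hS.2
    · intro R hR
      rw [mem_powerset] at hR
      exact union_sdiff_cancel_right (disjoint_of_subset_left hR sdiff_disjoint)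
    · intro S hS
      simp only [mem_filter, mem_powerset] at hS
      have htS : t ≤ S.card := hcardA ▸ card_le_card hS.2
      congr 2
      rw [card_sdiff_of_subset hS.2, hcardA, Nat.sub_add_cancel htS]
  rw [h2, Finset.sum_powerset_apply_card (fun m => c / ((n - 1).choose (m + t) : ℝ)), hcardB]
  -- step 4: per-term simplification via choose identity
  have hY : ((n - 1).choose t : ℝ) ≠ 0 := by
    have : t ≤ n - 1 := by omega
    exact_mod_cast (Nat.choose_pos this).ne'
  have h4 : ∀ m ∈ Finset.range (n - 1 - t + 1),
      (n - 1 - t).choose m • (c / ((n - 1).choose (m + t) : ℝ))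
      = c * ((m + t).choose t : ℝ) / ((n - 1).choose t : ℝ) := by
    intro m hm
    rw [Finset.mem_range] at hm
    have hmt : m + t ≤ n - 1 := by omega
    have hX : ((n - 1).choose (m + t) : ℝ) ≠ 0 :=
      (by exact_mod_cast (Nat.choose_pos hmt).ne' : ((n - 1).choose (m + t) : ℝ) ≠ 0)
    have hnat := Nat.choose_mul (n := n - 1) (k := m + t) (s := t) (Nat.le_add_left t m)
    rw [Nat.add_sub_cancel] at hnat
    have key : ((n - 1).choose (m + t) : ℝ) * ((m + t).choose t : ℝ)
        = ((n - 1).choose t : ℝ) * ((n - 1 - t).choose m : ℝ) := by exact_mod_cast hnat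
    rw [nsmul_eq_mul]
    field_simp
    linear_combination -c * key
  rw [Finset.sum_congr rfl h4]
  -- step 5: hockey stick
  have h5 : ∑ m ∈ Finset.range (n - 1 - t + 1), ((m + t).choose t : ℕ) = n.choose (t + 1) := by
    have hrange : n - 1 - t + 1 = n - t := by omega
    rw [hrange]
    have hIcc : ∑ m ∈ Finset.range (n - t), (m + t).choose t
        = ∑ j ∈ Finset.Icc t (n - 1), j.choose t := by
      apply Finset.sum_nbij' (fun m => m + t) (fun j => j - t)
      · intro m hm; rw [Finset.mem_range] at hm; rw [Finset.mem_Icc]; omega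
      · intro j hj; rw [Finset.mem_Icc] at hj; rw [Finset.mem_range]; omega
      · intro m _; omega
      · intro j hj; rw [Finset.mem_Icc] at hj; omega
      · intro m _; rfl
    rw [hIcc, Nat.sum_Icc_choose]
    congr 1
    omega
  have h5' : ∑ m ∈ Finset.range (n - 1 - t + 1),
      c * ((m + t).choose t : ℝ) / ((n - 1).choose t : ℝ)
      = c * (n.choose (t + 1) : ℝ) / ((n - 1).choose t : ℝ) := by
    rw [← Finset.sum_div, ← Finset.mul_sum]
    congr 2
    rw [← Nat.cast_sum, h5]
  rw [h5']
  -- step 6: finish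
  have hkey : (n : ℝ) * ((n - 1).choose t : ℝ) = (n.choose (t + 1) : ℝ) * (t + 1 : ℕ) := by
    obtain ⟨m, rfl⟩ : ∃ m, n = m + 1 := ⟨n - 1, by omega⟩
    have h := Nat.add_one_mul_choose_eq m t
    simp only [Nat.add_sub_cancel]
    exact_mod_cast h
  rw [ht]
  have hne : (n : ℝ) ≠ 0 := by positivity
  have htne : ((t : ℝ) + 1) ≠ 0 := by positivity
  push_cast at hkey ⊢
  field_simp
  linear_combination -c * hkey

end DataShapleyAux

/-- Uniqueness of the data Shapley value: any valuation `ψ` satisfying the null player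
property, symmetry, additivity, and efficiency coincides with the data Shapley value
`φ_i(V) = (1/n) · Σ_{S ⊆ D \ {i}} (V(S ∪ {i}) − V(S)) / binom(n−1, |S|)`. -/
theorem dataShapley_unique {n : ℕ}
    (ψ : (Finset (Fin n) → ℝ) → Fin n → ℝ)
    (hnull : ∀ (V : Finset (Fin n) → ℝ) (i : Fin n),
      (∀ S ⊆ Finset.univ.erase i, V (insert i S) = V S) → ψ V i = 0)
    (hsym : ∀ (V : Finset (Fin n) → ℝ) (i j : Fin n), i ≠ j →
      (∀ S ⊆ (Finset.univ.erase i).erase j, V (insert i S) = V (insert j S)) →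
      ψ V i = ψ V j)
    (hadd : ∀ (V W : Finset (Fin n) → ℝ) (i : Fin n),
      ψ (fun S => V S + W S) i = ψ V i + ψ W i)
    (heff : ∀ V : Finset (Fin n) → ℝ, ∑ i : Fin n, ψ V i = V Finset.univ - V ∅) :
    ∀ (V : Finset (Fin n) → ℝ) (i : Fin n), ψ V i = dataShapley V i := by
  intro V i
  open DataShapleyAux in
  have hψ0 : ∀ j : Fin n, ψ (fun _ => (0 : ℝ)) j = 0 := fun j =>
    hnull _ j (fun S _ => rfl)
  calc ψ V i
      = ψ (fun S => ∑ T ∈ (Finset.univ : Finset (Fin n)).powerset,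
          uGame (moeb V T) T S) i := by
        congr 1
        funext S
        exact decomp V S
    _ = ∑ T ∈ (Finset.univ : Finset (Fin n)).powerset, ψ (uGame (moeb V T) T) i :=
        sum_apply ψ hψ0 hadd _ _ i
    _ = ∑ T ∈ (Finset.univ : Finset (Fin n)).powerset,
          dataShapley (uGame (moeb V T) T) i := by
        refine Finset.sum_congr rfl fun T _ => ?_
        rw [psi_uGame ψ hnull hsym heff, dataShapley_uGame]
    _ = dataShapley (fun S => ∑ T ∈ (Finset.univ : Finset (Fin n)).powerset,
          uGame (moeb V T) T S) i :=
        (sum_apply dataShapley dataShapley_zero dataShapley_add _ _ i).symm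
    _ = dataShapley V i := by
        congr 1
        funext S
        exact (decomp V S).symm
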